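/- Let μ be a fuzzy measure, A ∈ Σ, f a nonnegative measurable function, and define the distribution function F(α) = μ(A ∩ {x : f x ≥ α}). If F(α₀) = α₀ for some α₀ ≥ 0, then the Sugeno integral of f over A equals α₀. -/
import Mathlib


open MeasureTheory Set ENNReal Filter

/-- Sugeno integral of `f` over `A` w.r.t. a set function `μ`. -/
noncomputable def sugeno {X : Type*} (μ : Set X → ℝ≥0∞) (A : Set X) (f : X → ℝ) : ℝ≥0∞ :=
  ⨆ α : NNReal, ((α : ℝ≥0∞) ⊓ μ (A ∩ {x | (α : ℝ) ≤ f x}))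

theorem sugeno_of_fixed_point {X : Type*} [MeasurableSpace X] (μ : Set X → ℝ≥0∞)
    (hμ0 : μ ∅ = 0) (hmono : ∀ s t : Set X, s ⊆ t → μ s ≤ μ t)
    (A : Set X) (hA : MeasurableSet A)
    (f : X → ℝ) (hf : Measurable f) (hf0 : ∀ x, 0 ≤ f x) (α₀ : NNReal)
    (hfix : μ (A ∩ {x | (α₀ : ℝ) ≤ f x}) = (α₀ : ℝ≥0∞)) :
    sugeno μ A f = (α₀ : ℝ≥0∞) := by
  apply le_antisymm
  · apply iSup_le
    intro α
    rcases le_total α α₀ with h | h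
    · exact le_trans inf_le_left (by exact_mod_cast h)
    · refine le_trans inf_le_right ?_
      rw [← hfix]
      apply hmono
      apply inter_subset_inter_right
      intro x hx
      exact le_trans (show (α₀:ℝ) ≤ (α:ℝ) by exact_mod_cast h) hx
  · have : ((α₀ : ℝ≥0∞) ⊓ μ (A ∩ {x | (α₀ : ℝ) ≤ f x})) = (α₀ : ℝ≥0∞) := by
      rw [hfix, inf_idem]
    calc (α₀ : ℝ≥0∞) = _ := this.symm
      _ ≤ sugeno μ A f := le_iSup (fun α : NNReal => ((α : ℝ≥0∞) ⊓ μ (A ∩ {x | (α : ℝ) ≤ f x}))) α₀
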